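/- Let (S,+) be a commutative cancellative semigroup and let (S−S,+) denote its difference group (the group of differences a−b for a,b ∈ S, into which S canonically embeds). If A ⊆ S is thick in S, then A is thick in S−S. -/

import Mathlib

/-- A subset `A` of an additive semigroup `T` is *thick* if for every finite nonempty
subset `F` of `T` there exists `x ∈ T` with `F + x ⊆ A`. -/
def AddThick {T : Type*} [Add T] (A : Set T) : Prop :=
  ∀ F : Finset T, F.Nonempty → ∃ x : T, ∀ f ∈ F, f + x ∈ A

private lemma aux_sum_range {S G : Type*} [AddCommSemigroup S] [AddCommGroup G]
    (φ : S → G) (hhom : ∀ x y : S, φ (x + y) = φ x + φ y)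
    (T : Finset G) (f : G → G) (c : G)
    (hf : ∀ i ∈ T, ∃ s, φ s = f i) (hc : ∃ s, φ s = c) :
    ∃ s, φ s = (∑ i ∈ T, f i) + c := by
  classical
  induction T using Finset.induction_on with
  | empty => simpa using hc
  | insert x T' hx ih =>
    obtain ⟨s1, hs1⟩ := hf x (Finset.mem_insert_self _ _)
    obtain ⟨s2, hs2⟩ := ih (fun i hi => hf i (Finset.mem_insert_of_mem hi))
    refine ⟨s1 + s2, ?_⟩
    rw [hhom, hs1, hs2, Finset.sum_insert hx, add_assoc]

/-- Let `(S,+)` be a commutative cancellative semigroup and let `(G,+)` together with the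
injective additive embedding `φ : S → G` be its difference group (every element of `G`
is a difference `φ a - φ b` with `a, b ∈ S`).  If `A ⊆ S` is thick in `S`, then `A`
(regarded via `φ` as a subset of `G`) is thick in `G`. -/
theorem addThick_image_of_addThick {S G : Type*} [AddCommSemigroup S] [IsCancelAdd S]
    [AddCommGroup G] (φ : S → G) (hinj : Function.Injective φ)
    (hhom : ∀ x y : S, φ (x + y) = φ x + φ y)
    (hdiff : ∀ g : G, ∃ a b : S, g = φ a - φ b)
    (A : Set S) (hA : AddThick A) : AddThick (φ '' A) := by
  classical
  intro F hF
  choose a b hab using hdiff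
  obtain ⟨g0, hg0⟩ := hF
  -- B with φ B = ∑_{g ∈ F} φ (b g) + φ (b g0)
  obtain ⟨B, hB⟩ := aux_sum_range φ hhom F (fun g => φ (b g)) (φ (b g0))
    (fun i _ => ⟨b i, rfl⟩) ⟨b g0, rfl⟩
  -- for each g ∈ F, φ B - φ (b g) is in the range of φ
  have hr : ∀ g ∈ F, ∃ r : S, φ (b g) + φ r = φ B := by
    intro g hg
    obtain ⟨r, hrr⟩ := aux_sum_range φ hhom (F.erase g) (fun h => φ (b h)) (φ (b g0))
      (fun i _ => ⟨b i, rfl⟩) ⟨b g0, rfl⟩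
    refine ⟨r, ?_⟩
    rw [hrr, hB, ← Finset.add_sum_erase F (fun h => φ (b h)) hg, add_assoc]
  choose r hrB using hr
  -- apply thickness of A in S
  set M : Finset S := F.attach.image (fun g => a g.1 + r g.1 g.2) with hM
  have hMne : M.Nonempty := ⟨a g0 + r g0 hg0, Finset.mem_image.2 ⟨⟨g0, hg0⟩, Finset.mem_attach _ _, rfl⟩⟩
  obtain ⟨t, ht⟩ := hA M hMne
  refine ⟨φ B + φ t, ?_⟩
  intro g hg
  refine ⟨a g + r g hg + t, ht _ (Finset.mem_image.2 ⟨⟨g, hg⟩, Finset.mem_attach _ _, rfl⟩), ?_⟩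
  have h1 : g + φ (b g) = φ (a g) := eq_sub_iff_add_eq.mp (hab g)
  rw [hhom, hhom, ← hrB g hg, ← h1]
  abel
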